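/- Let $z_1,\ldots,z_{n+1}\in\mathcal{Z}$, let $\ell(z;\cdot):\mathbb{R}^d\to\mathbb{R}$ be convex with $|\ell(z;\theta)-\ell(z;\theta')|\le\rho(z)\|\theta-\theta'\|_2$, let $\lambda>0$, and define $\hat\theta_{n+1}=\arg\min_\theta \frac{1}{n+1}\sum_{j=1}^{n+1}\ell(z_j;\theta)+\frac{\lambda}{2}\|\theta\|_2^2$ and $\hat\theta_{-i}=\arg\min_\theta \frac{1}{n}\sum_{j\ne i}\ell(z_j;\theta)+\frac{\lambda}{2}\|\theta\|_2^2$. Then for every $i$, $\rho(z_i)\|\hat\theta_{n+1}-\hat\theta_{-i}\|_2\le\frac{1}{\lambda(n+1)}\big(\rho(z_i)^2+\frac{1}{n}\sum_{j\ne i}\rho(z_i)\rho(z_j)\big)$, and averaging, $\frac{1}{n+1}\sum_{i=1}^{n+1}\rho(z_i)\|\hat\theta_{n+1}-\hat\theta_{-i}\|_2\le\frac{2}{\lambda(n+1)^2}\sum_{i=1}^{n+1}\rho(z_i)^2$. -/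

import Mathlib

open Finset

lemma norm_combo_sq {E : Type*} [NormedAddCommGroup E] [InnerProductSpace ℝ E]
    (u θ : E) (t : ℝ) :
    ‖(1-t)•u + t•θ‖^2 = (1-t)*‖u‖^2 + t*‖θ‖^2 - (1-t)*t*‖u-θ‖^2 := by
  have h1 : ((inner ℝ ((1-t)•u + t•θ) ((1-t)•u + t•θ)) : ℝ) = ‖(1-t)•u + t•θ‖^2 :=
    real_inner_self_eq_norm_sq _
  have h2 : ((inner ℝ (u-θ) (u-θ)) : ℝ) = ‖u-θ‖^2 := real_inner_self_eq_norm_sq _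
  have h3 : ((inner ℝ u u) : ℝ) = ‖u‖^2 := real_inner_self_eq_norm_sq _
  have h4 : ((inner ℝ θ θ) : ℝ) = ‖θ‖^2 := real_inner_self_eq_norm_sq _
  rw [← h1, ← h2, ← h3, ← h4]
  simp only [inner_add_add_self, inner_sub_sub_self, real_inner_smul_left, real_inner_smul_right]
  rw [real_inner_comm θ u]
  ring

lemma strong_min {E : Type*} [NormedAddCommGroup E] [InnerProductSpace ℝ E]
    (g : E → ℝ)
    (hg : ∀ (θ θ' : E) (t : ℝ), 0 < t → t < 1 →
      g ((1-t)•θ + t•θ') ≤ (1-t) * g θ + t * g θ')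
    (lam : ℝ) (hlam : 0 < lam) (u : E)
    (hmin : ∀ θ, g u + lam/2*‖u‖^2 ≤ g θ + lam/2*‖θ‖^2) (θ : E) :
    g u + lam/2*‖u‖^2 + lam/2*‖u-θ‖^2 ≤ g θ + lam/2*‖θ‖^2 := by
  have step : ∀ t : ℝ, 0 < t → t < 1 →
      g u + lam/2*‖u‖^2 + lam/2*(1-t)*‖u-θ‖^2 ≤ g θ + lam/2*‖θ‖^2 := by
    intro t ht0 ht1
    have h1 := hmin ((1-t)•u + t•θ)
    have h2 := hg u θ t ht0 ht1
    have h3 := norm_combo_sq u θ t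
    nlinarith [h1, h2, h3, sq_nonneg ‖u-θ‖]
  have key : lam/2*‖u-θ‖^2 ≤ (g θ + lam/2*‖θ‖^2) - (g u + lam/2*‖u‖^2) := by
    refine le_of_forall_pos_le_add fun ε hε => ?_
    set D := lam/2*‖u-θ‖^2 with hD
    have hD0 : 0 ≤ D := by positivity
    set t := min (1/2 : ℝ) (ε / (D+1)) with htdef
    have ht0 : 0 < t := lt_min (by norm_num) (by positivity)
    have ht1 : t < 1 := lt_of_le_of_lt (min_le_left _ _) (by norm_num)
    have h := step t ht0 ht1
    have htε : t * D ≤ ε := by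
      have h1 : t ≤ ε / (D+1) := min_le_right _ _
      have h2 : t * D ≤ (ε / (D+1)) * D := mul_le_mul_of_nonneg_right h1 hD0
      calc t * D ≤ (ε / (D+1)) * D := h2
        _ ≤ ε := by
            rw [div_mul_eq_mul_div, div_le_iff₀ (by positivity)]
            nlinarith
    nlinarith [h]
  linarith


set_option maxHeartbeats 1000000 in
/-- **Parameter-shift bound for regularized ERM** (key step of Proposition 6): with
convex `ρ(z)`-Lipschitz losses and regularization `λ > 0`, the full-data minimizer and
each leave-one-out minimizer satisfy the weighted shift bound, and on average
`(1/(n+1)) ∑ᵢ ρ(zᵢ)‖θ̂₊ - θ̂₋ᵢ‖ ≤ (2/(λ(n+1)²)) ∑ᵢ ρ(zᵢ)²`. -/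
theorem erm_parameter_shift
    {𝒵 : Type*} (d n : ℕ) (hn : 0 < n)
    (z : Fin (n + 1) → 𝒵) (ℓ : 𝒵 → EuclideanSpace ℝ (Fin d) → ℝ) (ρ : 𝒵 → ℝ)
    (hρ : ∀ w, 0 ≤ ρ w)
    (hconv : ∀ w, ConvexOn ℝ Set.univ (ℓ w))
    (hlip : ∀ w θ θ', |ℓ w θ - ℓ w θ'| ≤ ρ w * ‖θ - θ'‖)
    (lam : ℝ) (hlam : 0 < lam)
    (θfull : EuclideanSpace ℝ (Fin d)) (θm : Fin (n + 1) → EuclideanSpace ℝ (Fin d))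
    -- θfull minimizes the full-data regularized empirical risk
    (hfull : ∀ θ, (1 / (n + 1 : ℝ)) * ∑ j : Fin (n + 1), ℓ (z j) θfull + lam / 2 * ‖θfull‖ ^ 2
      ≤ (1 / (n + 1 : ℝ)) * ∑ j : Fin (n + 1), ℓ (z j) θ + lam / 2 * ‖θ‖ ^ 2)
    -- θm i minimizes the leave-one-out regularized empirical risk
    (hm : ∀ (i : Fin (n + 1)) (θ),
      (1 / (n : ℝ)) * ∑ j ∈ Finset.univ.erase i, ℓ (z j) (θm i) + lam / 2 * ‖θm i‖ ^ 2
        ≤ (1 / (n : ℝ)) * ∑ j ∈ Finset.univ.erase i, ℓ (z j) θ + lam / 2 * ‖θ‖ ^ 2) :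
    (∀ i : Fin (n + 1),
      ρ (z i) * ‖θfull - θm i‖
        ≤ (1 / (lam * (n + 1 : ℝ))) *
            (ρ (z i) ^ 2 + (1 / (n : ℝ)) * ∑ j ∈ Finset.univ.erase i, ρ (z i) * ρ (z j)))
    ∧ (1 / (n + 1 : ℝ)) * ∑ i : Fin (n + 1), ρ (z i) * ‖θfull - θm i‖
        ≤ (2 / (lam * (n + 1 : ℝ) ^ 2)) * ∑ i : Fin (n + 1), ρ (z i) ^ 2 := by
  have hn0 : (0:ℝ) < (n:ℝ) := by exact_mod_cast hn
  have hn1 : (0:ℝ) < (n:ℝ) + 1 := by linarith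
  -- convex combination bound for weighted loss sums
  have hcomb : ∀ (c : ℝ), 0 ≤ c → ∀ (s : Finset (Fin (n+1))) (θ θ' : EuclideanSpace ℝ (Fin d))
      (t : ℝ), 0 < t → t < 1 →
      c * ∑ j ∈ s, ℓ (z j) ((1-t)•θ + t•θ')
        ≤ (1-t) * (c * ∑ j ∈ s, ℓ (z j) θ) + t * (c * ∑ j ∈ s, ℓ (z j) θ') := by
    intro c hc s θ θ' t ht0 ht1
    have h1 : ∑ j ∈ s, ℓ (z j) ((1-t)•θ + t•θ')
        ≤ ∑ j ∈ s, ((1-t) * ℓ (z j) θ + t * ℓ (z j) θ') := by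
      refine Finset.sum_le_sum fun j _ => ?_
      have := (hconv (z j)).2 (Set.mem_univ θ) (Set.mem_univ θ')
        (show (0:ℝ) ≤ 1-t by linarith) ht0.le (by ring)
      simpa using this
    calc c * ∑ j ∈ s, ℓ (z j) ((1-t)•θ + t•θ')
        ≤ c * ∑ j ∈ s, ((1-t) * ℓ (z j) θ + t * ℓ (z j) θ') :=
          mul_le_mul_of_nonneg_left h1 hc
      _ = (1-t) * (c * ∑ j ∈ s, ℓ (z j) θ) + t * (c * ∑ j ∈ s, ℓ (z j) θ') := by
          rw [Finset.sum_add_distrib, ← Finset.mul_sum, ← Finset.mul_sum]; ring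
  have Hfull := strong_min (fun θ => (1 / (n + 1 : ℝ)) * ∑ j : Fin (n+1), ℓ (z j) θ)
    (fun θ θ' t ht0 ht1 => hcomb (1 / (n + 1 : ℝ)) (by positivity) Finset.univ θ θ' t ht0 ht1)
    lam hlam θfull hfull
  have Hm : ∀ i : Fin (n+1),
      ∀ θ, (1 / (n : ℝ)) * ∑ j ∈ Finset.univ.erase i, ℓ (z j) (θm i) + lam/2*‖θm i‖^2
        + lam/2*‖θm i - θ‖^2
        ≤ (1 / (n : ℝ)) * ∑ j ∈ Finset.univ.erase i, ℓ (z j) θ + lam/2*‖θ‖^2 :=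
    fun i => strong_min (fun θ => (1 / (n : ℝ)) * ∑ j ∈ Finset.univ.erase i, ℓ (z j) θ)
      (fun θ θ' t ht0 ht1 => hcomb (1 / (n : ℝ)) (by positivity) _ θ θ' t ht0 ht1)
      lam hlam (θm i) (hm i)
  -- the distance bound
  have dist_bound : ∀ i : Fin (n+1),
      ‖θfull - θm i‖ ≤ (1 / (lam * ((n:ℝ) + 1))) *
        (ρ (z i) + (1 / (n : ℝ)) * ∑ j ∈ Finset.univ.erase i, ρ (z j)) := by
    intro i
    set D := ‖θfull - θm i‖ with hDdef
    set Su := ∑ j ∈ Finset.univ.erase i, ℓ (z j) θfull with hSu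
    set Sv := ∑ j ∈ Finset.univ.erase i, ℓ (z j) (θm i) with hSv
    set R := ∑ j ∈ Finset.univ.erase i, ρ (z j) with hR
    have hRnn : 0 ≤ R := Finset.sum_nonneg fun j _ => hρ _
    have A := Hfull (θm i)
    have B := Hm i θfull
    rw [show ‖θm i - θfull‖ = D by rw [hDdef, norm_sub_rev]] at B
    have hsplit_u : ∑ j : Fin (n+1), ℓ (z j) θfull = ℓ (z i) θfull + Su :=
      (Finset.add_sum_erase _ _ (Finset.mem_univ i)).symm
    have hsplit_v : ∑ j : Fin (n+1), ℓ (z j) (θm i) = ℓ (z i) (θm i) + Sv :=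
      (Finset.add_sum_erase _ _ (Finset.mem_univ i)).symm
    simp only [hsplit_u, hsplit_v] at A
    have hlip_i : ℓ (z i) (θm i) - ℓ (z i) θfull ≤ ρ (z i) * D := by
      have h := hlip (z i) (θm i) θfull
      rw [norm_sub_rev] at h
      exact le_trans (le_abs_self _) h
    have hsum : Su - Sv ≤ R * D := by
      rw [hSu, hSv, hR, ← Finset.sum_sub_distrib, Finset.sum_mul]
      exact Finset.sum_le_sum fun j _ => le_trans (le_abs_self _) (hlip (z j) θfull (θm i))
    -- combine
    have hco : (0:ℝ) ≤ 1/(n:ℝ) - 1/((n:ℝ)+1) := by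
      rw [sub_nonneg, div_le_div_iff₀ hn1 hn0]; linarith
    have h1 := mul_le_mul_of_nonneg_left hlip_i (le_of_lt (show (0:ℝ) < 1/((n:ℝ)+1) by positivity))
    have h2 := mul_le_mul_of_nonneg_left hsum hco
    have quad : lam * D^2 ≤
        (1/((n:ℝ)+1)) * (ρ (z i) * D) + (1/(n:ℝ) - 1/((n:ℝ)+1)) * (R * D) := by
      nlinarith [A, B, h1, h2]
    have hDnn : 0 ≤ D := norm_nonneg _
    rcases eq_or_lt_of_le hDnn with h0 | h0
    · rw [← h0]
      have : 0 ≤ (1 / (lam * ((n:ℝ) + 1))) * (ρ (z i) + (1 / (n : ℝ)) * R) := by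
        apply mul_nonneg (by positivity)
        have := hρ (z i)
        positivity
      linarith
    · have lin : lam * D ≤ (1/((n:ℝ)+1)) * ρ (z i) + (1/(n:ℝ) - 1/((n:ℝ)+1)) * R := by
        nlinarith [quad, h0]
      rw [show (1 / (lam * ((n:ℝ) + 1))) * (ρ (z i) + (1 / (n : ℝ)) * R)
          = ((1/((n:ℝ)+1)) * ρ (z i) + (1/(n:ℝ) - 1/((n:ℝ)+1)) * R) / lam by
        field_simp; ring]
      rw [le_div_iff₀ hlam]
      linarith [lin]
  -- part 1
  have part1 : ∀ i : Fin (n + 1),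
      ρ (z i) * ‖θfull - θm i‖
        ≤ (1 / (lam * (n + 1 : ℝ))) *
            (ρ (z i) ^ 2 + (1 / (n : ℝ)) * ∑ j ∈ Finset.univ.erase i, ρ (z i) * ρ (z j)) := by
    intro i
    have hmul := mul_le_mul_of_nonneg_left (dist_bound i) (hρ (z i))
    rw [show ∑ j ∈ Finset.univ.erase i, ρ (z i) * ρ (z j)
        = ρ (z i) * ∑ j ∈ Finset.univ.erase i, ρ (z j) from (Finset.mul_sum _ _ _).symm]
    calc ρ (z i) * ‖θfull - θm i‖
        ≤ ρ (z i) * ((1 / (lam * ((n:ℝ) + 1))) *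
            (ρ (z i) + (1 / (n : ℝ)) * ∑ j ∈ Finset.univ.erase i, ρ (z j))) := hmul
      _ = (1 / (lam * ((n:ℝ) + 1))) *
            (ρ (z i) ^ 2 + (1 / (n : ℝ)) * (ρ (z i) * ∑ j ∈ Finset.univ.erase i, ρ (z j))) := by
          ring
  refine ⟨part1, ?_⟩
  -- part 2
  set S := ∑ i : Fin (n+1), ρ (z i)^2 with hSdef
  have hSnn : 0 ≤ S := Finset.sum_nonneg fun i _ => sq_nonneg _
  have h2S : ∑ i : Fin (n+1),
      (ρ (z i)^2 + (1/(n:ℝ)) * ∑ j ∈ Finset.univ.erase i, ρ (z i) * ρ (z j)) ≤ 2 * S := by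
    have hcard : ∀ i : Fin (n+1), ((Finset.univ.erase i).card : ℝ) = (n:ℝ) := by
      intro i
      rw [Finset.card_erase_of_mem (Finset.mem_univ i), Finset.card_univ, Fintype.card_fin]
      simp
    have hpoint : ∀ i ∈ (Finset.univ : Finset (Fin (n+1))),
        ρ (z i)^2 + (1/(n:ℝ)) * ∑ j ∈ Finset.univ.erase i, ρ (z i) * ρ (z j)
        ≤ ρ (z i)^2 + (1/(n:ℝ)) * (((n:ℝ) * ρ (z i)^2 + (S - ρ (z i)^2))/2) := by
      intro i _
      have h1 : ∑ j ∈ Finset.univ.erase i, ρ (z i) * ρ (z j)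
          ≤ ∑ j ∈ Finset.univ.erase i, (ρ (z i)^2 + ρ (z j)^2)/2 :=
        Finset.sum_le_sum fun j _ => by nlinarith [sq_nonneg (ρ (z i) - ρ (z j))]
      have h2 : ∑ j ∈ Finset.univ.erase i, (ρ (z i)^2 + ρ (z j)^2)/2
          = ((n:ℝ) * ρ (z i)^2 + (S - ρ (z i)^2))/2 := by
        rw [← Finset.sum_div, Finset.sum_add_distrib, Finset.sum_const,
          Finset.sum_erase_eq_sub (Finset.mem_univ i), nsmul_eq_mul, ← hSdef]
        rw [show ((Finset.univ.erase i).card : ℝ) = (n:ℝ) from hcard i]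
      have h3 := le_trans h1 (le_of_eq h2)
      have := mul_le_mul_of_nonneg_left h3 (le_of_lt (show (0:ℝ) < 1/(n:ℝ) by positivity))
      linarith
    calc ∑ i : Fin (n+1),
        (ρ (z i)^2 + (1/(n:ℝ)) * ∑ j ∈ Finset.univ.erase i, ρ (z i) * ρ (z j))
        ≤ ∑ i : Fin (n+1),
          (ρ (z i)^2 + (1/(n:ℝ)) * (((n:ℝ) * ρ (z i)^2 + (S - ρ (z i)^2))/2)) :=
          Finset.sum_le_sum hpoint
      _ = 2 * S := by
          rw [Finset.sum_add_distrib, ← hSdef, ← Finset.mul_sum]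
          have : ∑ i : Fin (n+1), (((n:ℝ) * ρ (z i)^2 + (S - ρ (z i)^2))/2)
              = (((n:ℝ) * S + (((n:ℝ)+1) * S - S))/2) := by
            rw [← Finset.sum_div]
            congr 1
            rw [Finset.sum_add_distrib, ← Finset.mul_sum, Finset.sum_sub_distrib,
              Finset.sum_const, Finset.card_univ, Fintype.card_fin, nsmul_eq_mul, ← hSdef]
            push_cast
            ring
          rw [this]
          field_simp
          ring
  calc (1 / (n + 1 : ℝ)) * ∑ i : Fin (n + 1), ρ (z i) * ‖θfull - θm i‖
      ≤ (1 / (n + 1 : ℝ)) * ∑ i : Fin (n + 1), ((1 / (lam * (n + 1 : ℝ))) *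
          (ρ (z i) ^ 2 + (1 / (n : ℝ)) * ∑ j ∈ Finset.univ.erase i, ρ (z i) * ρ (z j))) :=
        mul_le_mul_of_nonneg_left (Finset.sum_le_sum fun i _ => part1 i) (by positivity)
    _ = (1 / (n + 1 : ℝ)) * ((1 / (lam * (n + 1 : ℝ))) * ∑ i : Fin (n+1),
          (ρ (z i)^2 + (1/(n:ℝ)) * ∑ j ∈ Finset.univ.erase i, ρ (z i) * ρ (z j))) := by
        rw [← Finset.mul_sum]
    _ ≤ (1 / (n + 1 : ℝ)) * ((1 / (lam * (n + 1 : ℝ))) * (2 * S)) := by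
        apply mul_le_mul_of_nonneg_left _ (by positivity)
        exact mul_le_mul_of_nonneg_left h2S (by positivity)
    _ = (2 / (lam * (n + 1 : ℝ) ^ 2)) * S := by
        have hl : lam ≠ 0 := hlam.ne'
        have hn1' : ((n:ℝ)+1) ≠ 0 := hn1.ne'
        field_simp
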